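/- With the resonator coefficients f = f_M as defined and g the multiplicative function supported on squarefree integers with g(p) = 1 + f(p)², for every ε > 0 one has Σ_{a ≤ M} Λ₂(a) f(a)/(√a · g(a)) ≪_ε (log M)^{1+ε} as M → ∞, where Λ₂ = μ * log² is the second generalized von Mangoldt function, Λ₂(n) = Σ_{d | n} μ(d)(log(n/d))². -/

import Mathlib

open Filter Finset
open scoped Classical

/-- `L = √(log M · log log M)` for the resonator parameter `M`. -/
noncomputable def resL (M : ℕ) : ℝ := Real.sqrt (Real.log M * Real.log (Real.log M))

/-- The value of the resonator coefficients at a prime `p`: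
`f(p) = L/(√p log p)` if `L² ≤ p ≤ exp((log L)²)`, and `f(p) = 0` otherwise. -/
noncomputable def resFp (M p : ℕ) : ℝ :=
  if resL M ^ 2 ≤ (p : ℝ) ∧ (p : ℝ) ≤ Real.exp (Real.log (resL M) ^ 2) then
    resL M / (Real.sqrt p * Real.log p)
  else 0

/-- The resonator coefficients `f = f_M`: the multiplicative function supported on squarefree
integers determined by its values `resFp` at primes. -/
noncomputable def resF (M n : ℕ) : ℝ :=
  if Squarefree n then ∏ p ∈ n.primeFactors, resFp M p else 0

/-- `Q₁ = Π_p (1 + f(p)² + f(p)/√p)`. -/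
noncomputable def resQ1 (M : ℕ) : ℝ :=
  ∏ᶠ p ∈ {p : ℕ | p.Prime}, (1 + resFp M p ^ 2 + resFp M p / Real.sqrt p)

/-- `Q₂ = Π_p (1 + f(p)²)`. -/
noncomputable def resQ2 (M : ℕ) : ℝ :=
  ∏ᶠ p ∈ {p : ℕ | p.Prime}, (1 + resFp M p ^ 2)

/-- The multiplicative function `g` supported on squarefree integers with `g(p) = 1 + f(p)²`. -/
noncomputable def resG (M n : ℕ) : ℝ :=
  if Squarefree n then ∏ p ∈ n.primeFactors, (1 + resFp M p ^ 2) else 0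

/-- The second generalized von Mangoldt function `Λ₂ = μ * log²`, i.e.
`Λ₂(n) = Σ_{d | n} μ(d) (log(n/d))²`. -/
noncomputable def vonMangoldtTwo (n : ℕ) : ℝ :=
  ∑ d ∈ n.divisors, (ArithmeticFunction.moebius d : ℝ) * Real.log ((n : ℝ) / d) ^ 2

open ArithmeticFunction

section Aux

/-! ### The identity `Λ₂ = Λ·log + Λ∗Λ` -/

lemma resKeySum (m : ℕ) (hm : 0 < m) :
    ∑ d ∈ m.divisors, (Λ d * Real.log d + ∑ e ∈ d.divisors, Λ e * Λ (d / e))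
      = Real.log m ^ 2 := by
  have h1 : ∑ d ∈ m.divisors, (∑ e ∈ d.divisors, Λ e * Λ (d / e))
      = ∑ d ∈ m.divisors, Λ d * Real.log ((m / d : ℕ) : ℝ) := by
    have e1 : ∀ d, (∑ e ∈ d.divisors, Λ e * Λ (d / e)) = (Λ * Λ) d := by
      intro d
      rw [mul_apply, ← Nat.sum_divisorsAntidiagonal (fun e c => Λ e * Λ c)]
    simp_rw [e1]
    have e2 : ∑ d ∈ m.divisors, (Λ * Λ) d = ((Λ * Λ) * ArithmeticFunction.zeta) m := by
      rw [coe_mul_zeta_apply]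
    rw [e2, mul_assoc, vonMangoldt_mul_zeta, mul_apply,
      Nat.sum_divisorsAntidiagonal (fun d e => Λ d * ArithmeticFunction.log e)]
    simp [ArithmeticFunction.log_apply]
  rw [Finset.sum_add_distrib, h1, ← Finset.sum_add_distrib]
  have h2 : ∀ d ∈ m.divisors, Λ d * Real.log d + Λ d * Real.log ((m / d : ℕ))
      = Λ d * Real.log m := by
    intro d hd
    rw [Nat.mem_divisors] at hd
    rw [← mul_add, ← Real.log_mul (by exact_mod_cast (Nat.pos_of_mem_divisors (Nat.mem_divisors.mpr hd)).ne') (by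
      have := Nat.div_pos (Nat.le_of_dvd hm hd.1) (Nat.pos_of_dvd_of_pos hd.1 hm)
      exact_mod_cast this.ne'), ← Nat.cast_mul, Nat.mul_div_cancel' hd.1]
  rw [Finset.sum_congr rfl h2, ← Finset.sum_mul, vonMangoldt_sum, sq]

lemma vonMangoldtTwo_eq {n : ℕ} (hn : 0 < n) :
    vonMangoldtTwo n = Λ n * Real.log n + ∑ d ∈ n.divisors, Λ d * Λ (n / d) := by
  have h := (ArithmeticFunction.sum_eq_iff_sum_smul_moebius_eq
    (f := fun d => Λ d * Real.log d + ∑ e ∈ d.divisors, Λ e * Λ (d / e))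
    (g := fun m : ℕ => Real.log m ^ 2)).mp (fun m hm => resKeySum m hm) n hn
  rw [← h, vonMangoldtTwo,
    Nat.sum_divisorsAntidiagonal (fun d e => (ArithmeticFunction.moebius d : ℤ) • (Real.log e ^ 2))]
  refine Finset.sum_congr rfl fun d hd => ?_
  rw [Nat.mem_divisors] at hd
  rw [Nat.cast_div hd.1 (by exact_mod_cast (Nat.pos_of_dvd_of_pos hd.1 hn).ne')]
  rw [zsmul_eq_mul]

/-! ### Positivity and multiplicativity facts -/

lemma resL_nonneg (M : ℕ) : 0 ≤ resL M := Real.sqrt_nonneg _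

lemma resFp_nonneg (M p : ℕ) : 0 ≤ resFp M p := by
  unfold resFp
  split
  · exact div_nonneg (resL_nonneg M) (mul_nonneg (Real.sqrt_nonneg _)
      (Real.log_natCast_nonneg p))
  · exact le_refl _

lemma resF_nonneg (M n : ℕ) : 0 ≤ resF M n := by
  unfold resF
  split
  · exact Finset.prod_nonneg fun p _ => resFp_nonneg M p
  · exact le_refl _

lemma one_le_resG {M n : ℕ} (h : Squarefree n) : 1 ≤ resG M n := by
  unfold resG
  rw [if_pos h]
  calc (1:ℝ) = ∏ _p ∈ n.primeFactors, 1 := by simp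
  _ ≤ _ := Finset.prod_le_prod (fun _ _ => zero_le_one)
      (fun p _ => le_add_of_nonneg_right (sq_nonneg (resFp M p)))

lemma resF_mul {M d e : ℕ} (h : Squarefree (d * e)) :
    resF M (d * e) = resF M d * resF M e := by
  have hsq := h
  rw [Nat.squarefree_mul_iff] at hsq
  obtain ⟨hcop, hd1, hd2⟩ := hsq
  rw [resF, resF, resF, if_pos h, if_pos hd1, if_pos hd2,
    Nat.primeFactors_mul hd1.ne_zero hd2.ne_zero,
    Finset.prod_union (Nat.Coprime.disjoint_primeFactors hcop)]

lemma resF_mul_div {M a d : ℕ} (ha : Squarefree a) (hd : d ∣ a) :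
    resF M a = resF M d * resF M (a / d) := by
  have hmul : d * (a / d) = a := Nat.mul_div_cancel' hd
  have h2 : Squarefree (d * (a / d)) := by rw [hmul]; exact ha
  have h3 := resF_mul (M := M) h2
  rw [hmul] at h3
  exact h3

/-! ### Pointwise bounds -/

noncomputable def resX (M : ℕ) : ℝ := Real.exp (Real.log (resL M) ^ 2)
noncomputable def resV (M d : ℕ) : ℝ := if (d : ℝ) ≤ resX M then (d : ℝ)⁻¹ else 0

lemma resV_nonneg (M d : ℕ) : 0 ≤ resV M d := by
  unfold resV; split
  · positivity
  · exact le_refl _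

lemma prime_of_ne {M d : ℕ} (h1 : Λ d ≠ 0) (h2 : resF M d ≠ 0) : d.Prime := by
  have hsf : Squarefree d := by
    by_contra hc
    exact h2 (by rw [resF, if_neg hc])
  exact Nat.squarefree_and_prime_pow_iff_prime.mp
    ⟨hsf, vonMangoldt_ne_zero_iff.mp h1⟩

lemma resF_prime {M p : ℕ} (hp : p.Prime) : resF M p = resFp M p := by
  rw [resF, if_pos hp.squarefree, Nat.Prime.primeFactors hp, Finset.prod_singleton]

lemma resF_le (M d : ℕ) : Λ d * resF M d / Real.sqrt d ≤ resL M * resV M d := by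
  rcases eq_or_ne (Λ d) 0 with h | h
  · rw [h, zero_mul, zero_div]
    exact mul_nonneg (resL_nonneg M) (resV_nonneg M d)
  rcases eq_or_ne (resF M d) 0 with h2 | h2
  · rw [h2, mul_zero, zero_div]
    exact mul_nonneg (resL_nonneg M) (resV_nonneg M d)
  have hp : d.Prime := prime_of_ne h h2
  rw [resF_prime hp] at h2 ⊢
  rw [resFp] at h2 ⊢
  split at h2
  case isFalse => exact absurd rfl h2
  case isTrue hcond =>
    rw [if_pos hcond, vonMangoldt_apply_prime hp, resV, resX, if_pos hcond.2]
    have hd1 : (1:ℝ) < d := by exact_mod_cast hp.one_lt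
    have hlog : 0 < Real.log d := Real.log_pos hd1
    have hsq : 0 < Real.sqrt d := Real.sqrt_pos.mpr (by linarith)
    have hss : Real.sqrt d * Real.sqrt d = (d:ℝ) := Real.mul_self_sqrt (by linarith)
    refine le_of_eq ?_
    rw [eq_comm]
    field_simp
    linear_combination resL M * hss

lemma resT1_le (M a : ℕ) :
    Λ a * Real.log a * resF M a / Real.sqrt a
      ≤ resL M * Real.log (resL M) ^ 2 * resV M a := by
  have hrhs : 0 ≤ resL M * Real.log (resL M) ^ 2 * resV M a :=
    mul_nonneg (mul_nonneg (resL_nonneg M) (sq_nonneg _)) (resV_nonneg M a)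
  rcases eq_or_ne (Λ a) 0 with h | h
  · rw [h, zero_mul, zero_mul, zero_div]; exact hrhs
  rcases eq_or_ne (resF M a) 0 with h2 | h2
  · rw [h2, mul_zero, zero_div]; exact hrhs
  have hp : a.Prime := prime_of_ne h h2
  rw [resF_prime hp] at h2 ⊢
  rw [resFp] at h2 ⊢
  split at h2
  case isFalse => exact absurd rfl h2
  case isTrue hcond =>
    rw [if_pos hcond, vonMangoldt_apply_prime hp, resV, resX, if_pos hcond.2]
    have hd1 : (1:ℝ) < a := by exact_mod_cast hp.one_lt
    have hlog : 0 < Real.log a := Real.log_pos hd1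
    have hsq : 0 < Real.sqrt a := Real.sqrt_pos.mpr (by linarith)
    have hss : Real.sqrt a * Real.sqrt a = (a:ℝ) := Real.mul_self_sqrt (by linarith)
    have hle : Real.log a ≤ Real.log (resL M) ^ 2 := by
      have := Real.log_le_log (by linarith : (0:ℝ) < (a:ℝ)) hcond.2
      rwa [Real.log_exp] at this
    have heq : Real.log a * Real.log a * (resL M / (Real.sqrt a * Real.log a)) / Real.sqrt a
        = resL M * Real.log a * (a:ℝ)⁻¹ := by
      rw [eq_comm]
      field_simp
      linear_combination resL M * hss
    rw [heq]
    have hainv : (0:ℝ) ≤ ((a:ℝ))⁻¹ := by positivity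
    have : resL M * Real.log a ≤ resL M * Real.log (resL M) ^ 2 :=
      mul_le_mul_of_nonneg_left hle (resL_nonneg M)
    exact mul_le_mul_of_nonneg_right this hainv

/-! ### Sum bounds -/

lemma resPairSum (F : ℕ → ℝ) (hF : ∀ n, 0 ≤ F n) (M : ℕ) :
    ∑ a ∈ Finset.Icc 1 M, ∑ d ∈ a.divisors, F d * F (a / d)
      ≤ (∑ d ∈ Finset.Icc 1 M, F d) ^ 2 := by
  have h1 : ∀ a ∈ Finset.Icc 1 M, ∑ d ∈ a.divisors, F d * F (a / d)
      = ∑ x ∈ a.divisorsAntidiagonal, F x.1 * F x.2 := fun a _ =>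
    (Nat.sum_divisorsAntidiagonal fun d e => F d * F e).symm
  rw [Finset.sum_congr rfl h1]
  have hdisj : (Finset.Icc 1 M : Set ℕ).PairwiseDisjoint Nat.divisorsAntidiagonal := by
    intro a _ b _ hab
    simp only [Finset.disjoint_left]
    intro x hxa hxb
    rw [Nat.mem_divisorsAntidiagonal] at hxa hxb
    exact hab (hxa.1.symm.trans hxb.1)
  rw [← Finset.sum_biUnion hdisj]
  have hsub : (Finset.Icc 1 M).biUnion Nat.divisorsAntidiagonal
      ⊆ Finset.Icc 1 M ×ˢ Finset.Icc 1 M := by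
    intro x hx
    rw [Finset.mem_biUnion] at hx
    obtain ⟨a, ha, hxa⟩ := hx
    rw [Finset.mem_Icc] at ha
    have h1 := Nat.fst_mem_divisors_of_mem_antidiagonal hxa
    have h2 := Nat.snd_mem_divisors_of_mem_antidiagonal hxa
    rw [Nat.mem_divisors] at h1 h2
    rw [Finset.mem_product, Finset.mem_Icc, Finset.mem_Icc]
    have hx1 : 1 ≤ x.1 := Nat.pos_of_dvd_of_pos h1.1 (Nat.pos_of_ne_zero h1.2)
    have hx2 : 1 ≤ x.2 := Nat.pos_of_dvd_of_pos h2.1 (Nat.pos_of_ne_zero h2.2)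
    exact ⟨⟨hx1, le_trans (Nat.le_of_dvd (Nat.pos_of_ne_zero h1.2) h1.1) ha.2⟩,
      ⟨hx2, le_trans (Nat.le_of_dvd (Nat.pos_of_ne_zero h2.2) h2.1) ha.2⟩⟩
  refine le_trans (Finset.sum_le_sum_of_subset_of_nonneg hsub
    (fun x _ _ => mul_nonneg (hF _) (hF _))) ?_
  rw [Finset.sum_product, sq]
  rw [← Finset.sum_mul_sum]

lemma resSumV_le (M : ℕ) :
    ∑ d ∈ Finset.Icc 1 M, resV M d ≤ 1 + Real.log (resL M) ^ 2 := by
  have hX1 : (1:ℝ) ≤ resX M := Real.one_le_exp (sq_nonneg _)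
  have step1 : ∑ d ∈ Finset.Icc 1 M, resV M d
      = ∑ d ∈ (Finset.Icc 1 M).filter (fun d : ℕ => (d:ℝ) ≤ resX M), (d:ℝ)⁻¹ := by
    rw [Finset.sum_filter]
    rfl
  have step2 : (Finset.Icc 1 M).filter (fun d : ℕ => (d:ℝ) ≤ resX M)
      ⊆ Finset.Icc 1 ⌊resX M⌋₊ := by
    intro d hd
    rw [Finset.mem_filter, Finset.mem_Icc] at hd
    exact Finset.mem_Icc.mpr ⟨hd.1.1, Nat.le_floor hd.2⟩
  have step3 : ∑ d ∈ Finset.Icc 1 ⌊resX M⌋₊, ((d:ℝ))⁻¹ = ((harmonic ⌊resX M⌋₊ : ℚ) : ℝ) := by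
    rw [harmonic_eq_sum_Icc]
    push_cast
    rfl
  calc ∑ d ∈ Finset.Icc 1 M, resV M d
      ≤ ∑ d ∈ Finset.Icc 1 ⌊resX M⌋₊, ((d:ℝ))⁻¹ := by
        rw [step1]
        exact Finset.sum_le_sum_of_subset_of_nonneg step2 (fun d _ _ => by positivity)
    _ = ((harmonic ⌊resX M⌋₊ : ℚ) : ℝ) := step3
    _ ≤ 1 + Real.log (resX M) := harmonic_floor_le_one_add_log _ hX1
    _ = 1 + Real.log (resL M) ^ 2 := by rw [resX, Real.log_exp]

lemma vonMangoldtTwo_nonneg {a : ℕ} (ha : 0 < a) : 0 ≤ vonMangoldtTwo a := by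
  rw [vonMangoldtTwo_eq ha]
  exact add_nonneg (mul_nonneg vonMangoldt_nonneg (Real.log_natCast_nonneg a))
    (Finset.sum_nonneg fun d _ => mul_nonneg vonMangoldt_nonneg vonMangoldt_nonneg)

lemma resTerm_le (M a : ℕ) (ha : 0 < a) :
    vonMangoldtTwo a * resF M a / (Real.sqrt a * resG M a)
      ≤ Λ a * Real.log a * resF M a / Real.sqrt a
        + ∑ d ∈ a.divisors,
            (Λ d * resF M d / Real.sqrt d) * (Λ (a / d) * resF M (a / d) / Real.sqrt ((a / d : ℕ) : ℝ)) := by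
  have hrhs : 0 ≤ Λ a * Real.log a * resF M a / Real.sqrt a
        + ∑ d ∈ a.divisors,
            (Λ d * resF M d / Real.sqrt d) * (Λ (a / d) * resF M (a / d) / Real.sqrt ((a / d : ℕ) : ℝ)) := by
    refine add_nonneg (div_nonneg (mul_nonneg (mul_nonneg vonMangoldt_nonneg
      (Real.log_natCast_nonneg a)) (resF_nonneg M a)) (Real.sqrt_nonneg _))
      (Finset.sum_nonneg fun d _ => mul_nonneg ?_ ?_)
    · exact div_nonneg (mul_nonneg vonMangoldt_nonneg (resF_nonneg M d)) (Real.sqrt_nonneg _)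
    · exact div_nonneg (mul_nonneg vonMangoldt_nonneg (resF_nonneg M _)) (Real.sqrt_nonneg _)
  by_cases hsf : Squarefree a
  case neg =>
    have h0 : resF M a = 0 := by rw [resF, if_neg hsf]
    calc vonMangoldtTwo a * resF M a / (Real.sqrt a * resG M a) = 0 := by
          rw [h0, mul_zero, zero_div]
      _ ≤ _ := hrhs
  case pos =>
    have hnum : 0 ≤ vonMangoldtTwo a * resF M a :=
      mul_nonneg (vonMangoldtTwo_nonneg ha) (resF_nonneg M a)
    have hsqa : 0 < Real.sqrt a := Real.sqrt_pos.mpr (by exact_mod_cast ha)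
    have hg := one_le_resG (M := M) hsf
    have step1 : vonMangoldtTwo a * resF M a / (Real.sqrt a * resG M a)
        ≤ vonMangoldtTwo a * resF M a / Real.sqrt a := by
      apply div_le_div_of_nonneg_left hnum hsqa
      exact le_mul_of_one_le_right hsqa.le hg
    refine le_trans step1 (le_of_eq ?_)
    rw [vonMangoldtTwo_eq ha, add_mul, add_div, Finset.sum_mul, Finset.sum_div]
    congr 1
    refine Finset.sum_congr rfl fun d hd => ?_
    rw [Nat.mem_divisors] at hd
    have hmul : d * (a / d) = a := Nat.mul_div_cancel' hd.1
    have hf := resF_mul_div (M := M) hsf hd.1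
    have hsqrt : Real.sqrt a = Real.sqrt d * Real.sqrt ((a / d : ℕ) : ℝ) := by
      rw [← Real.sqrt_mul (Nat.cast_nonneg d), ← Nat.cast_mul, hmul]
    rw [hf, hsqrt]
    ring

lemma resSum_le (M : ℕ) :
    ∑ a ∈ Finset.Icc 1 M, vonMangoldtTwo a * resF M a / (Real.sqrt a * resG M a)
      ≤ resL M * Real.log (resL M) ^ 2 * (1 + Real.log (resL M) ^ 2)
        + (resL M * (1 + Real.log (resL M) ^ 2)) ^ 2 := by
  have hH : 0 ≤ 1 + Real.log (resL M) ^ 2 := by positivity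
  have step1 : ∑ a ∈ Finset.Icc 1 M, vonMangoldtTwo a * resF M a / (Real.sqrt a * resG M a)
      ≤ ∑ a ∈ Finset.Icc 1 M, (Λ a * Real.log a * resF M a / Real.sqrt a
        + ∑ d ∈ a.divisors,
            (Λ d * resF M d / Real.sqrt d) * (Λ (a / d) * resF M (a / d) / Real.sqrt ((a / d : ℕ) : ℝ))) :=
    Finset.sum_le_sum fun a ha =>
      resTerm_le M a (Finset.mem_Icc.mp ha).1
  refine le_trans step1 ?_
  rw [Finset.sum_add_distrib]
  have hT1 : ∑ a ∈ Finset.Icc 1 M, Λ a * Real.log a * resF M a / Real.sqrt a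
      ≤ resL M * Real.log (resL M) ^ 2 * (1 + Real.log (resL M) ^ 2) := by
    calc ∑ a ∈ Finset.Icc 1 M, Λ a * Real.log a * resF M a / Real.sqrt a
        ≤ ∑ a ∈ Finset.Icc 1 M, resL M * Real.log (resL M) ^ 2 * resV M a :=
          Finset.sum_le_sum fun a _ => resT1_le M a
      _ = resL M * Real.log (resL M) ^ 2 * ∑ a ∈ Finset.Icc 1 M, resV M a := by
          rw [Finset.mul_sum]
      _ ≤ _ := mul_le_mul_of_nonneg_left (resSumV_le M)
          (mul_nonneg (resL_nonneg M) (sq_nonneg _))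
  have hT2 : ∑ a ∈ Finset.Icc 1 M, ∑ d ∈ a.divisors,
        (Λ d * resF M d / Real.sqrt d) * (Λ (a / d) * resF M (a / d) / Real.sqrt ((a / d : ℕ) : ℝ))
      ≤ (resL M * (1 + Real.log (resL M) ^ 2)) ^ 2 := by
    have hFnn : ∀ n, 0 ≤ Λ n * resF M n / Real.sqrt n := fun n =>
      div_nonneg (mul_nonneg vonMangoldt_nonneg (resF_nonneg M n)) (Real.sqrt_nonneg _)
    refine le_trans (resPairSum _ hFnn M) ?_
    have hsum : ∑ d ∈ Finset.Icc 1 M, Λ d * resF M d / Real.sqrt d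
        ≤ resL M * (1 + Real.log (resL M) ^ 2) := by
      calc ∑ d ∈ Finset.Icc 1 M, Λ d * resF M d / Real.sqrt d
          ≤ ∑ d ∈ Finset.Icc 1 M, resL M * resV M d :=
            Finset.sum_le_sum fun d _ => resF_le M d
        _ = resL M * ∑ d ∈ Finset.Icc 1 M, resV M d := by rw [Finset.mul_sum]
        _ ≤ _ := mul_le_mul_of_nonneg_left (resSumV_le M) (resL_nonneg M)
    exact pow_le_pow_left₀ (Finset.sum_nonneg fun d _ => hFnn d) hsum 2
  exact add_le_add hT1 hT2

lemma resSum_nonneg (M : ℕ) :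
    0 ≤ ∑ a ∈ Finset.Icc 1 M, vonMangoldtTwo a * resF M a / (Real.sqrt a * resG M a) := by
  refine Finset.sum_nonneg fun a ha => ?_
  have ha1 : 0 < a := (Finset.mem_Icc.mp ha).1
  refine div_nonneg (mul_nonneg (vonMangoldtTwo_nonneg ha1) (resF_nonneg M a)) ?_
  refine mul_nonneg (Real.sqrt_nonneg _) ?_
  unfold resG; split
  · exact Finset.prod_nonneg fun p _ => by positivity
  · exact le_refl _

end Aux

/-- With the resonator coefficients `f = f_M` as defined and `g` the
multiplicative function supported on squarefree integers with `g(p) = 1 + f(p)²`, for every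
`ε > 0` one has `Σ_{a ≤ M} Λ₂(a) f(a)/(√a g(a)) ≪_ε (log M)^{1+ε}` as `M → ∞`. -/
theorem resonator_vonMangoldtTwo_sum (ε : ℝ) (hε : 0 < ε) :
    (fun M : ℕ =>
        ∑ a ∈ Finset.Icc 1 M, vonMangoldtTwo a * resF M a / (Real.sqrt a * resG M a))
      =O[atTop] fun M : ℕ => Real.log M ^ ((1 : ℝ) + ε) := by
  have hlogM : Tendsto (fun M : ℕ => Real.log M) atTop atTop :=
    Real.tendsto_log_atTop.comp tendsto_natCast_atTop_atTop
  have hloglog : Tendsto (fun M : ℕ => Real.log (Real.log M)) atTop atTop :=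
    Real.tendsto_log_atTop.comp hlogM
  have hA : (fun M : ℕ =>
        ∑ a ∈ Finset.Icc 1 M, vonMangoldtTwo a * resF M a / (Real.sqrt a * resG M a))
      =O[atTop] fun M : ℕ => Real.log M * Real.log (Real.log M) ^ 5 := by
    rw [Asymptotics.isBigO_iff]
    refine ⟨6, ?_⟩
    filter_upwards [hlogM.eventually_ge_atTop 3, hloglog.eventually_ge_atTop 1] with M hy hz
    set y := Real.log M with hy_def
    set z := Real.log (Real.log M) with hz_def
    have hy0 : (0:ℝ) ≤ y := by linarith
    have hz0 : (0:ℝ) ≤ z := by linarith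
    have hL2 : resL M ^ 2 = y * z := Real.sq_sqrt (mul_nonneg hy0 hz0)
    have hLy : resL M ≤ y := by
      have hzy : z ≤ y := by
        have := Real.log_le_sub_one_of_pos (show (0:ℝ) < y by linarith)
        rw [← hz_def] at this
        linarith
      have h' : resL M ≤ Real.sqrt (y * y) := Real.sqrt_le_sqrt (by nlinarith)
      rwa [Real.sqrt_mul_self hy0] at h'
    have hL1 : 1 ≤ resL M := by nlinarith [resL_nonneg M, hL2]
    have hlr : Real.log (resL M) ≤ z := by
      have := Real.log_le_log (by linarith : (0:ℝ) < resL M) hLy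
      rwa [← hz_def] at this
    have hlr0 : 0 ≤ Real.log (resL M) := Real.log_nonneg hL1
    have hB := resSum_le M
    have hS0 := resSum_nonneg M
    rw [Real.norm_eq_abs, abs_of_nonneg hS0]
    have e1 : Real.log (resL M) ^ 2 ≤ z ^ 2 := pow_le_pow_left₀ hlr0 hlr 2
    have e2 : 1 + Real.log (resL M) ^ 2 ≤ 2 * z ^ 2 := by nlinarith
    have h1 : resL M * Real.log (resL M) ^ 2 * (1 + Real.log (resL M) ^ 2)
        ≤ y * z ^ 2 * (2 * z ^ 2) :=
      mul_le_mul (mul_le_mul hLy e1 (sq_nonneg _) hy0) e2 (by positivity) (by positivity)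
    have h2 : (resL M * (1 + Real.log (resL M) ^ 2)) ^ 2 ≤ (y * z) * (2 * z ^ 2) ^ 2 := by
      rw [mul_pow, hL2]
      exact mul_le_mul_of_nonneg_left
        (pow_le_pow_left₀ (by positivity) e2 2) (by nlinarith)
    have h3 : y * z ^ 4 ≤ y * z ^ 5 :=
      mul_le_mul_of_nonneg_left (pow_le_pow_right₀ hz (by norm_num)) hy0
    have h4 : 0 ≤ y * z ^ 5 := by positivity
    rw [Real.norm_eq_abs, abs_of_nonneg h4]
    nlinarith
  have hlog5 : (fun x : ℝ => Real.log x ^ 5) =o[atTop] fun x : ℝ => x ^ ε := by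
    have h := (isLittleO_log_rpow_atTop (show 0 < ε / 5 by linarith)).pow (n := 5)
      (by norm_num)
    refine h.congr' EventuallyEq.rfl ?_
    filter_upwards [eventually_ge_atTop (0:ℝ)] with x hx
    rw [← Real.rpow_natCast (x ^ (ε / 5)) 5, ← Real.rpow_mul hx]
    norm_num
  have hreal : (fun x : ℝ => x * Real.log x ^ 5) =O[atTop] fun x : ℝ => x ^ ((1:ℝ) + ε) := by
    have h := (Asymptotics.isBigO_refl (fun x : ℝ => x) atTop).mul hlog5.isBigO
    refine h.congr' EventuallyEq.rfl ?_
    filter_upwards [eventually_gt_atTop (0:ℝ)] with x hx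
    rw [Real.rpow_add hx, Real.rpow_one]
  exact hA.trans (hreal.comp_tendsto hlogM)
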